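/- arXiv:1411.6863 — 2 statements merged into one kernel-verified Lean document; each statement's English description precedes it below -/
import Mathlib

section
/- Let D be a topological group with identity e and S a subgroup of D. Then the image of π₁(D, e) in π₁(D, S, e) under the natural map is contained in the center of π₁(D, S, e). -/
open unitInterval

/-- Relative homotopy of paths `(I, ∂I, 0) → (D, S, e)` in a topological group `D`
with subgroup `S`: a homotopy keeping the value at `0` equal to the identity and
the value at `1` inside `S`. -/
def RelHtpy {D : Type*} [TopologicalSpace D] [Group D] [IsTopologicalGroup D]
    (S : Subgroup D) (γ γ' : C(unitInterval, D)) : Prop :=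
  ∃ H : C(unitInterval × unitInterval, D),
    (∀ t, H (t, 0) = γ t) ∧ (∀ t, H (t, 1) = γ' t) ∧
    (∀ s, H (0, s) = 1) ∧ (∀ s, (H (1, s)) ∈ S)

/-- The path `t ↦ a · h(t)` from `a` to `a·b`. -/
def translPath {D : Type*} [TopologicalSpace D] [Group D] [IsTopologicalGroup D]
    (a b : D) (h : Path (1 : D) b) : Path a (a * b) :=
  ⟨⟨fun t => a * h t, by continuity⟩, by simp, by simp⟩

/-- The representative of the product `[g]·[h]` in `π₁(D, S, e)`: first run `g`,
then run `g(1)·h`. -/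
noncomputable def mulRep {D : Type*} [TopologicalSpace D] [Group D] [IsTopologicalGroup D]
    {a b : D} (g : Path (1 : D) a) (h : Path (1 : D) b) : Path (1 : D) (a * b) :=
  g.trans (translPath a b h)

/-- Let `D` be a topological group with identity `e` and `S` a
subgroup of `D`. Then the image of `π₁(D, e)` in `π₁(D, S, e)` is contained in
the center of `π₁(D, S, e)`: for every loop `ℓ` at `e` (representing an element
of the image of `π₁(D, e)`) and every relative path `g`, the representatives of
`[ℓ]·[g]` and `[g]·[ℓ]` are relatively homotopic. -/
theorem stmt_6 {D : Type*} [TopologicalSpace D] [Group D] [IsTopologicalGroup D]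
    (S : Subgroup D) (a : D) (ha : a ∈ S)
    (ℓ : Path (1 : D) (1 : D)) (g : Path (1 : D) a) :
    RelHtpy S (mulRep ℓ g).toContinuousMap (mulRep g ℓ).toContinuousMap := by
  refine ⟨⟨fun p => g.extend (2 * (p.1 : ℝ) - (1 - (p.2 : ℝ))) *
      ℓ.extend (2 * (p.1 : ℝ) - (p.2 : ℝ)), by fun_prop⟩, ?_, ?_, ?_, ?_⟩
  · intro t
    simp only [ContinuousMap.coe_mk, Path.coe_toContinuousMap, Set.Icc.coe_zero, sub_zero]
    rw [mulRep, Path.trans_apply]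
    split_ifs with h
    · rw [Path.extend_of_le_zero g (by linarith), Path.extend_apply ℓ
        ⟨by linarith [t.2.1], by linarith⟩]
      simp
    · push_neg at h
      rw [Path.extend_apply g ⟨by linarith, by linarith [t.2.2]⟩,
        Path.extend_of_one_le ℓ (by linarith)]
      simp [translPath]
  · intro t
    simp only [ContinuousMap.coe_mk, Path.coe_toContinuousMap, Set.Icc.coe_one, sub_self,
      sub_zero]
    rw [mulRep, Path.trans_apply]
    split_ifs with h
    · rw [Path.extend_apply g ⟨by linarith [t.2.1], by linarith⟩,
        Path.extend_of_le_zero ℓ (by linarith)]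
      simp
    · push_neg at h
      rw [Path.extend_of_one_le g (by linarith), Path.extend_apply ℓ
        ⟨by linarith, by linarith [t.2.2]⟩]
      simp [translPath]
  · intro s
    simp only [ContinuousMap.coe_mk, Set.Icc.coe_zero, mul_zero, zero_sub]
    rw [Path.extend_of_le_zero g (by linarith [s.2.2]),
      Path.extend_of_le_zero ℓ (by linarith [s.2.1])]
    simp
  · intro s
    simp only [ContinuousMap.coe_mk, Set.Icc.coe_one, mul_one]
    rw [Path.extend_of_one_le g (by linarith [s.2.1]),
      Path.extend_of_one_le ℓ (by linarith [s.2.2])]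
    simpa using ha
end

section
/- Consider homomorphisms j₁ : P₁ → Q and η : Q → ℤ of groups together with boundary maps ∂_C : P₁ → S₁ (an isomorphism), j₀ : S₁ → S, ∂ : Q → S, k : S → ℤ/n satisfying: ∂ ∘ j₁ = j₀ ∘ ∂_C, k ∘ ∂ = (mod n) ∘ η, ker k = im j₀, ker ∂ is generated by central elements L, M with η(L) = n, η(M) = 0, and M = j₁(∂_C⁻¹(σ⁻¹)) viewed via ∂: if η(x) = 0 for x ∈ Q and ker k = im j₀ and η ∘ j₁ = 0, then x ∈ im j₁. (Exactness of the middle column: ker η = im j₁.) -/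
/-- Reduction mod `n` as a homomorphism `ℤ → ZMod n` (written multiplicatively). -/
def modn (n : ℕ) : Multiplicative ℤ →* Multiplicative (ZMod n) :=
  AddMonoidHom.toMultiplicative (Int.castAddHom (ZMod n))

/-- exactness of the middle column: Given groups `P₁, Q, S₁, S`,
`n ≥ 2`, an isomorphism `∂_C : P₁ ≅ S₁`, homomorphisms `j₁ : P₁ → Q`,
`j₀ : S₁ → S`, a surjective `∂ : Q → S` whose kernel is generated by central
elements `L, M`, `k : S → ZMod n` and `η : Q → ℤ`, satisfying
`∂ ∘ j₁ = j₀ ∘ ∂_C`, `k ∘ ∂ = (mod n) ∘ η`, `η ∘ j₁ = 0`, `η(L) = n`,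
`η(M) = 0`, `im j₀ = ker k`, and `M ∈ im j₁`; then `ker η = im j₁`. -/
theorem stmt_17 {P₁ Q S₁ S : Type*} [Group P₁] [Group Q] [Group S₁] [Group S]
    (n : ℕ) (hn : 2 ≤ n)
    (dC : P₁ →* S₁) (hdC : Function.Bijective dC)
    (j₁ : P₁ →* Q) (j₀ : S₁ →* S) (d : Q →* S) (hd : Function.Surjective d)
    (k : S →* Multiplicative (ZMod n)) (η : Q →* Multiplicative ℤ)
    (L M : Q) (hL : L ∈ Subgroup.center Q) (hM : M ∈ Subgroup.center Q)
    (hkerd : ∀ x : Q, d x = 1 ↔ ∃ a b : ℤ, x = L ^ a * M ^ b)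
    (hηL : η L = Multiplicative.ofAdd (n : ℤ)) (hηM : η M = 1)
    (hsq : d.comp j₁ = j₀.comp dC)
    (hkd : k.comp d = (modn n).comp η)
    (hηj : η.comp j₁ = 1)
    (hj0k : j₀.range = k.ker)
    (hMrange : M ∈ j₁.range) :
    η.ker = j₁.range := by
  apply le_antisymm
  · intro x hx
    have hx1 : η x = 1 := hx
    -- k (d x) = 1
    have hkdx : k (d x) = 1 := by
      have := DFunLike.congr_fun hkd x
      simp only [MonoidHom.comp_apply] at this
      rw [this, hx1, map_one]
    -- d x ∈ j₀.range
    have : d x ∈ j₀.range := by rw [hj0k]; exact hkdx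
    obtain ⟨s, hs⟩ := this
    obtain ⟨p, hp⟩ := hdC.2 s
    have hdj : d (j₁ p) = d x := by
      have := DFunLike.congr_fun hsq p
      simp only [MonoidHom.comp_apply] at this
      rw [this, hp, hs]
    have : d (x * (j₁ p)⁻¹) = 1 := by
      rw [map_mul, map_inv, hdj, mul_inv_cancel]
    obtain ⟨a, b, hab⟩ := (hkerd _).1 this
    have hxeq : x = L ^ a * M ^ b * j₁ p := by
      have := hab
      rw [← this, inv_mul_cancel_right]
    have hηjp : η (j₁ p) = 1 := DFunLike.congr_fun hηj p
    have hηx : η x = (Multiplicative.ofAdd (n : ℤ)) ^ a := by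
      rw [hxeq, map_mul, map_mul, map_zpow, map_zpow, hηL, hηM, hηjp,
        one_zpow, mul_one, mul_one]
    have ha : a = 0 := by
      rw [hx1] at hηx
      have h2 := congrArg Multiplicative.toAdd hηx.symm
      simp [← ofAdd_zsmul, smul_eq_mul] at h2
      rcases h2 with h | h
      · omega
      · exact h
    rw [ha, zpow_zero, one_mul] at hxeq
    rw [hxeq]
    exact mul_mem (zpow_mem hMrange b) ⟨p, rfl⟩
  · rintro _ ⟨p, rfl⟩
    exact DFunLike.congr_fun hηj p
end
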